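/- Let x : [0,∞) → ℝ be continuous with x(0) ≥ 0. There exists a unique pair (z, ℓ) of continuous functions such that: z = x + ℓ, z(t) ≥ 0 for all t, ℓ is nondecreasing with ℓ(0) = 0, and ℓ increases only when z = 0 (i.e. ∫₀^∞ 1_{z(s) > 0} dℓ(s) = 0). Moreover ℓ(t) = −min(0, inf_{s∈[0,t]} x(s)) = sup_{s∈[0,t]} max(0, −x(s)). -/

import Mathlib

open Set


namespace SkorokhodAux

noncomputable def g (x : ℝ → ℝ) (s : ℝ) : ℝ := max 0 (-x s)
noncomputable def L (x : ℝ → ℝ) (t : ℝ) : ℝ := sSup (g x '' Icc 0 t)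

variable {x : ℝ → ℝ} (hx : ContinuousOn x (Set.Ici 0)) (hx0 : 0 ≤ x 0)

include hx in
lemma hg_cont : ContinuousOn (g x) (Set.Ici 0) :=
  continuous_max.comp_continuousOn (continuousOn_const.prodMk hx.neg)

lemma g_nonneg (s : ℝ) : 0 ≤ g x s := le_max_left _ _

include hx0 in
lemma g0 : g x 0 = 0 := by simp [g, hx0]

include hx in
lemma bddA {s t : ℝ} (hs : 0 ≤ s) : BddAbove (g x '' Icc s t) :=
  (isCompact_Icc.image_of_continuousOn ((hg_cont hx).mono (fun u hu => hs.trans hu.1))).bddAbove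

lemma neA {s t : ℝ} (hst : s ≤ t) : (g x '' Icc s t).Nonempty :=
  (nonempty_Icc.mpr hst).image _

include hx in
lemma le_L {t u : ℝ} (hu : u ∈ Icc 0 t) : g x u ≤ L x t :=
  le_csSup (bddA hx le_rfl) (mem_image_of_mem _ hu)

include hx in
lemma L_mono : MonotoneOn (L x) (Set.Ici 0) := fun s hs t _ hst =>
  csSup_le_csSup (bddA hx le_rfl) (neA hs) (image_mono (Icc_subset_Icc_right hst))

include hx0 in
lemma L0 : L x 0 = 0 := by
  simp [L, Icc_self, g0 hx0]

include hx in
lemma L_nonneg {t : ℝ} (ht : 0 ≤ t) : 0 ≤ L x t :=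
  le_trans (g_nonneg 0) (le_L hx ⟨le_rfl, ht⟩)

include hx in
lemma L_split {s t : ℝ} (hs : 0 ≤ s) (hst : s ≤ t) :
    L x t = max (L x s) (sSup (g x '' Icc s t)) := by
  have : Icc (0:ℝ) t = Icc 0 s ∪ Icc s t := (Icc_union_Icc_eq_Icc hs hst).symm
  rw [L, this, image_union, csSup_union (bddA hx le_rfl) (neA hs) (bddA hx hs) (neA hst)]
  rfl

end SkorokhodAux

namespace SkorokhodAux
variable {x : ℝ → ℝ} (hx : ContinuousOn x (Set.Ici 0)) (hx0 : 0 ≤ x 0)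

lemma g_lip (u v : ℝ) : g x u ≤ g x v + |x u - x v| := by
  have h := abs_max_sub_max_le_abs (-x u) (-x v) 0
  rw [max_comm (-x u) 0, max_comm (-x v) 0, neg_sub_neg] at h
  have := (abs_le.mp h).2
  have habs : |x v - x u| = |x u - x v| := abs_sub_comm _ _
  simp only [g]
  linarith [le_abs_self (x v - x u), habs ▸ this]

include hx in
lemma L_le_add {s t ε : ℝ} (hs : 0 ≤ s) (hst : s ≤ t)
    (h : ∀ u ∈ Icc s t, g x u ≤ g x s + ε) : L x t ≤ L x s + ε := by
  have hε : 0 ≤ ε := by have := h s ⟨le_rfl, hst⟩; linarith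
  rw [L_split hx hs hst]
  refine max_le (by linarith) (csSup_le (neA hst) ?_)
  rintro b ⟨u, hu, rfl⟩
  exact (h u hu).trans (by have := le_L hx (⟨hs, le_rfl⟩ : s ∈ Icc 0 s); linarith)

include hx in
lemma L_cont : ContinuousOn (L x) (Set.Ici 0) := by
  intro t₀ ht₀
  rw [Metric.continuousWithinAt_iff]
  intro ε hε
  have hK : IsCompact (Icc (0:ℝ) (t₀ + 1)) := isCompact_Icc
  have hUC := hK.uniformContinuousOn_of_continuous (hx.mono (fun u hu => hu.1))
  rw [Metric.uniformContinuousOn_iff] at hUC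
  obtain ⟨δ, hδ, hδ'⟩ := hUC (ε / 2) (by linarith)
  refine ⟨min δ 1, lt_min hδ one_pos, fun y hy hyd => ?_⟩
  have hy0 : (0:ℝ) ≤ y := hy
  have hyd1 : |y - t₀| < 1 := lt_of_lt_of_le (by simpa [Real.dist_eq] using hyd) (min_le_right _ _)
  have hydδ : |y - t₀| < δ := lt_of_lt_of_le (by simpa [Real.dist_eq] using hyd) (min_le_left _ _)
  have hyK : y ∈ Icc (0:ℝ) (t₀ + 1) := ⟨hy0, by cases abs_lt.mp hyd1 with | intro h1 h2 => linarith⟩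
  have ht₀K : t₀ ∈ Icc (0:ℝ) (t₀ + 1) := ⟨ht₀, by linarith⟩
  have key : ∀ a b : ℝ, 0 ≤ a → a ≤ b → b ∈ Icc (0:ℝ) (t₀+1) → b - a < δ →
      L x b ≤ L x a + ε / 2 := by
    intro a b ha hab hbK hd
    refine L_le_add hx ha hab fun u hu => ?_
    have huK : u ∈ Icc (0:ℝ) (t₀+1) := ⟨ha.trans hu.1, hu.2.trans hbK.2⟩
    have haK : a ∈ Icc (0:ℝ) (t₀+1) := ⟨ha, hu.1.trans huK.2 |>.trans le_rfl⟩
    have : dist u a < δ := by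
      rw [Real.dist_eq, abs_of_nonneg (by linarith [hu.1])]
      linarith [hu.2]
    have := le_of_lt (hδ' u huK a haK this)
    rw [Real.dist_eq] at this
    linarith [g_lip (x := x) u a]
  rw [Real.dist_eq]
  rcases le_total y t₀ with h | h
  · have h1 : L x y ≤ L x t₀ := L_mono hx hy0 ht₀ h
    have h2 : L x t₀ ≤ L x y + ε / 2 := by
      refine key y t₀ hy0 h ht₀K ?_
      cases abs_lt.mp hydδ with | intro a b => linarith
    rw [abs_of_nonpos (by linarith)]
    linarith
  · have h1 : L x t₀ ≤ L x y := L_mono hx ht₀ hy0 h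
    have h2 : L x y ≤ L x t₀ + ε / 2 := by
      refine key t₀ y ht₀ h hyK ?_
      cases abs_lt.mp hydδ with | intro a b => linarith
    rw [abs_of_nonneg (by linarith)]
    linarith

include hx in
lemma L_flat {s t : ℝ} (hs : 0 ≤ s) (hst : s ≤ t)
    (h : ∀ u ∈ Icc s t, 0 < x u + L x u) : L x t = L x s := by
  by_contra hne
  have hle : L x s ≤ L x t := L_mono hx hs (hs.trans hst) hst
  have hlt : L x s < L x t := lt_of_le_of_ne hle (Ne.symm hne)
  obtain ⟨v, hv, hvsup⟩ := isCompact_Icc.exists_sSup_image_eq ⟨s, le_rfl, hst⟩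
    ((hg_cont hx).mono (fun u hu => hs.trans hu.1))
  have hsplit := L_split hx hs hst
  rw [hvsup] at hsplit
  have hLt : L x t = g x v := by
    rcases max_cases (L x s) (g x v) with ⟨h1, _⟩ | ⟨h1, _⟩
    · rw [hsplit, h1] at hlt; exact absurd hlt (lt_irrefl _)
    · rw [hsplit, h1]
  have hgv : L x s < g x v := by rw [← hLt]; exact hlt
  have hv0 : 0 ≤ v := hs.trans hv.1
  have hgpos : 0 < g x v := lt_of_le_of_lt (L_nonneg hx hs) hgv
  have hgx : g x v = -x v := by
    rcases max_cases (0:ℝ) (-x v) with ⟨h1, _⟩ | ⟨h1, _⟩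
    · rw [g] at hgpos; rw [h1] at hgpos; exact absurd hgpos (lt_irrefl _)
    · exact h1
  have hLv : L x v ≤ L x t := L_mono hx hv0 (hs.trans hst) (hv.2)
  have hgLv : g x v ≤ L x v := le_L hx ⟨hv0, le_rfl⟩
  have : L x v = -x v := le_antisymm (hgx ▸ hLt ▸ hLv) (hgx ▸ hgLv)
  have := h v hv
  rw [‹L x v = -x v›] at this
  linarith

end SkorokhodAux


/-- The deterministic Skorokhod reflection lemma at level 0: for continuous
`x : [0,∞) → ℝ` with `x 0 ≥ 0`, there is a pair `(z, ℓ)` with `z = x + ℓ`, `z ≥ 0`,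
`ℓ` nondecreasing continuous with `ℓ 0 = 0` increasing only when `z = 0`; it is
unique on `[0,∞)`, and `ℓ(t) = −min(0, inf_{s∈[0,t]} x(s)) = sup_{s∈[0,t]} max(0, −x(s))`. -/
theorem skorokhod_reflection_lemma
    (x : ℝ → ℝ) (hx : ContinuousOn x (Set.Ici 0)) (hx0 : 0 ≤ x 0) :
    ∃ z ℓ : ℝ → ℝ,
      (ContinuousOn z (Set.Ici 0) ∧ ContinuousOn ℓ (Set.Ici 0) ∧
        (∀ t, 0 ≤ t → z t = x t + ℓ t) ∧
        (∀ t, 0 ≤ t → 0 ≤ z t) ∧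
        MonotoneOn ℓ (Set.Ici 0) ∧ ℓ 0 = 0 ∧
        (∀ s t : ℝ, 0 ≤ s → s ≤ t → (∀ u ∈ Set.Icc s t, 0 < z u) → ℓ t = ℓ s)) ∧
      (∀ z' ℓ' : ℝ → ℝ,
        (ContinuousOn z' (Set.Ici 0) ∧ ContinuousOn ℓ' (Set.Ici 0) ∧
          (∀ t, 0 ≤ t → z' t = x t + ℓ' t) ∧
          (∀ t, 0 ≤ t → 0 ≤ z' t) ∧
          MonotoneOn ℓ' (Set.Ici 0) ∧ ℓ' 0 = 0 ∧
          (∀ s t : ℝ, 0 ≤ s → s ≤ t → (∀ u ∈ Set.Icc s t, 0 < z' u) → ℓ' t = ℓ' s)) →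
        ∀ t, 0 ≤ t → z' t = z t ∧ ℓ' t = ℓ t) ∧
      (∀ t, 0 ≤ t →
        ℓ t = -min 0 (sInf (x '' Set.Icc 0 t)) ∧
        ℓ t = sSup ((fun s => max 0 (-x s)) '' Set.Icc 0 t)) := by
  open SkorokhodAux in
  refine ⟨fun t => x t + SkorokhodAux.L x t, SkorokhodAux.L x, ?_, ?_, ?_⟩
  case refine_1 =>
    have hznn : ∀ t, 0 ≤ t → 0 ≤ x t + SkorokhodAux.L x t := by
      intro t ht
      have h1 : SkorokhodAux.g x t ≤ SkorokhodAux.L x t := SkorokhodAux.le_L hx ⟨ht, le_rfl⟩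
      have h2 : -x t ≤ SkorokhodAux.g x t := le_max_right _ _
      linarith
    exact ⟨hx.add (SkorokhodAux.L_cont hx), SkorokhodAux.L_cont hx,
      fun t _ => rfl, hznn, SkorokhodAux.L_mono hx, SkorokhodAux.L0 hx0,
      fun s t hs hst h => SkorokhodAux.L_flat hx hs hst h⟩
  case refine_2 =>
    rintro z' ℓ' ⟨hz'c, hℓ'c, heq', hz'nn, hmono', hℓ'0, hflat'⟩ t ht
    have hznn : ∀ w, 0 ≤ w → 0 ≤ x w + SkorokhodAux.L x w := by
      intro w hw
      have h1 : SkorokhodAux.g x w ≤ SkorokhodAux.L x w := SkorokhodAux.le_L hx ⟨hw, le_rfl⟩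
      have h2 : -x w ≤ SkorokhodAux.g x w := le_max_right _ _
      linarith
    have hge : SkorokhodAux.L x t ≤ ℓ' t := by
      refine csSup_le (SkorokhodAux.neA ht) ?_
      rintro b ⟨u, hu, rfl⟩
      have hu0 : (0:ℝ) ≤ u := hu.1
      have h1 : 0 ≤ ℓ' t := by
        have := hmono' (self_mem_Ici) (mem_Ici.mpr ht) ht
        rw [hℓ'0] at this; exact this
      have h2 : -x u ≤ ℓ' u := by
        have := hz'nn u hu0; rw [heq' u hu0] at this; linarith
      exact max_le h1 (h2.trans (hmono' (mem_Ici.mpr hu0) (mem_Ici.mpr ht) hu.2))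
    have hle : ℓ' t ≤ SkorokhodAux.L x t := by
      by_contra hc
      push_neg at hc
      set A : Set ℝ := Icc 0 t ∩ (fun s => ℓ' s - SkorokhodAux.L x s) ⁻¹' Iic 0 with hA
      have hAclosed : IsClosed A :=
        ContinuousOn.preimage_isClosed_of_isClosed
          ((hℓ'c.sub (SkorokhodAux.L_cont hx)).mono (fun u hu => hu.1))
          isClosed_Icc isClosed_Iic
      have hA0 : (0:ℝ) ∈ A := by
        refine ⟨⟨le_rfl, ht⟩, ?_⟩
        simp [hℓ'0, SkorokhodAux.L0 (x := x) hx0]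
      have hAbdd : BddAbove A := ⟨t, fun a ha => ha.1.2⟩
      set r := sSup A with hr
      have hrA : r ∈ A := hAclosed.csSup_mem ⟨0, hA0⟩ hAbdd
      have hr0 : 0 ≤ r := hrA.1.1
      have hrt : r ≤ t := hrA.1.2
      have hrL : ℓ' r ≤ SkorokhodAux.L x r := by
        have := hrA.2
        simp only [mem_preimage, mem_Iic] at this
        linarith
      have hrlt : r < t := by
        rcases lt_or_eq_of_le hrt with h | h
        · exact h
        · exfalso; rw [h] at hrL; linarith
      have hIoc : ∀ u ∈ Ioc r t, SkorokhodAux.L x u < ℓ' u := by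
        intro u hu
        by_contra hcc
        push_neg at hcc
        have : u ∈ A := ⟨⟨hr0.trans hu.1.le, hu.2⟩, by
          simp only [mem_preimage, mem_Iic]; linarith⟩
        exact absurd (le_csSup hAbdd this) (not_le.mpr hu.1)
      have hflat_all : ∀ u ∈ Ioc r t, ℓ' t = ℓ' u := by
        intro u hu
        refine hflat' u t (hr0.trans hu.1.le) hu.2 ?_
        intro w hw
        have hwIoc : w ∈ Ioc r t := ⟨hu.1.trans_le hw.1, hw.2⟩
        have hw0 : 0 ≤ w := hr0.trans hwIoc.1.le
        rw [heq' w hw0]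
        have := hIoc w hwIoc
        have := hznn w hw0
        linarith
      have hten1 : Filter.Tendsto ℓ' (nhdsWithin r (Ioi r)) (nhds (ℓ' r)) :=
        ((hℓ'c r (mem_Ici.mpr hr0)).tendsto).mono_left
          (nhdsWithin_mono r (fun u hu => hr0.trans (le_of_lt hu)))
      have hev : ∀ᶠ u in nhdsWithin r (Ioi r), ℓ' u = ℓ' t := by
        filter_upwards [Ioc_mem_nhdsGT_of_mem ⟨le_rfl, hrlt⟩] with u hu
        exact (hflat_all u hu).symm
      have hten2 : Filter.Tendsto ℓ' (nhdsWithin r (Ioi r)) (nhds (ℓ' t)) :=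
        Filter.Tendsto.congr' (hev.mono fun u h => h.symm) tendsto_const_nhds
      have heqrt : ℓ' r = ℓ' t := tendsto_nhds_unique hten1 hten2
      have hLr : SkorokhodAux.L x r ≤ SkorokhodAux.L x t :=
        SkorokhodAux.L_mono hx (mem_Ici.mpr hr0) (mem_Ici.mpr ht) hrt
      linarith
    have hℓeq : ℓ' t = SkorokhodAux.L x t := le_antisymm hle hge
    exact ⟨by rw [heq' t ht, hℓeq], hℓeq⟩
  case refine_3 =>
    intro t ht
    have h2 : SkorokhodAux.L x t = sSup ((fun s => max 0 (-x s)) '' Icc 0 t) := rfl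
    refine ⟨?_, h2⟩
    have himg : SkorokhodAux.g x '' Icc 0 t = (fun a => max 0 (-a)) '' (x '' Icc 0 t) := by
      rw [Set.image_image]
      rfl
    have hne : (x '' Icc 0 t).Nonempty := ⟨x 0, 0, ⟨le_rfl, ht⟩, rfl⟩
    have hbdd : BddBelow (x '' Icc 0 t) :=
      (isCompact_Icc.image_of_continuousOn (hx.mono (fun u hu => hu.1))).bddBelow
    have hanti : Antitone (fun a : ℝ => max 0 (-a)) :=
      fun a b hab => max_le_max le_rfl (neg_le_neg hab)
    have hca : ContinuousAt (fun a : ℝ => max 0 (-a)) (sInf (x '' Icc 0 t)) :=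
      (continuous_const.max continuous_neg).continuousAt
    have hmap := hanti.map_csInf_of_continuousAt hca hne hbdd
    have hminmax : ∀ c : ℝ, -min 0 c = max 0 (-c) := by
      intro c
      rcases le_total 0 c with h | h
      · simp [min_eq_left h, max_eq_left (neg_nonpos.mpr h)]
      · simp [min_eq_right h, max_eq_right (neg_nonneg.mpr h)]
    rw [hminmax]
    show SkorokhodAux.L x t = max 0 (-(sInf (x '' Icc 0 t)))
    rw [SkorokhodAux.L, himg, ← hmap]
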